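/- Suppose u₁,…,u_m is a basis of V over E orthogonal with respect to Φ, and set d_j := Φ(u_j,u_j); each d_j is fixed by ι and hence lies in E₀, and d_j ≠ 0. Then the ℚ-quadratic form Q(x) := Tr_{E/ℚ}(Φ(x,x)) on V is equivalent over ℚ (isometric as a quadratic form on a ℚ-vector space) to the orthogonal direct sum ⊕_{j=1}^m ( 2·Tr_{E₀}⟨d_j⟩ ⊕ 2·Tr_{E₀}⟨−θ²·d_j⟩ ), where 2·q denotes the quadratic form q multiplied by the scalar 2. -/

import Mathlib

/-- `E = E₀(θ)` a CM field with CM involution `ι`, `Φ` a nondegenerate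
hermitian sesquilinear form on the `m`-dimensional `E`-vector space `V`, `u₁,…,u_m` a
`Φ`-orthogonal `E`-basis, `d_j = Φ(u_j,u_j)`.  Each `d_j` is fixed by `ι`, hence lies
in `E₀`, and `d_j ≠ 0`; and the `ℚ`-quadratic form `Q(x) = Tr_{E/ℚ}(Φ(x,x))` on `V` is
equivalent over `ℚ` to `⊕_{j=1}^m ( 2·Tr_{E₀}⟨d_j⟩ ⊕ 2·Tr_{E₀}⟨−θ²·d_j⟩ )`. -/
theorem stmt7 (E₀ E V : Type*) [Field E₀] [NumberField E₀] [Field E] [NumberField E]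
    [Algebra E₀ E] [IsScalarTower ℚ E₀ E]
    (htotreal : ∀ (σ : E₀ →+* ℂ) (x : E₀), (σ x).im = 0)
    (s : ℕ) (hs : Module.finrank ℚ E₀ = s)
    (θ : E) (hθ : θ ∉ Set.range (algebraMap E₀ E))
    (θ0 : E₀) (hθ0 : algebraMap E₀ E θ0 = θ ^ 2)
    (hθ0neg : ∀ σ : E₀ →+* ℝ, σ θ0 < 0)
    (hgen : ∀ x : E, ∃ a b : E₀, x = algebraMap E₀ E a + algebraMap E₀ E b * θ)
    (ι : E →+* E) (hιfix : ∀ a : E₀, ι (algebraMap E₀ E a) = algebraMap E₀ E a)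
    (hιθ : ι θ = -θ)
    [AddCommGroup V] [Module E V] [Module ℚ V] [IsScalarTower ℚ E V]
    (Φ : V → V → E)
    (hΦadd1 : ∀ x x' y, Φ (x + x') y = Φ x y + Φ x' y)
    (hΦsmul1 : ∀ (e : E) (x y : V), Φ (e • x) y = e * Φ x y)
    (hΦadd2 : ∀ x y y', Φ x (y + y') = Φ x y + Φ x y')
    (hΦsmul2 : ∀ (e : E) (x y : V), Φ x (e • y) = ι e * Φ x y)
    (hΦherm : ∀ x y, Φ y x = ι (Φ x y))
    (hΦnondeg : ∀ x, (∀ y, Φ x y = 0) → x = 0)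
    (m : ℕ) (u : Module.Basis (Fin m) E V)
    (horth : ∀ i j : Fin m, i ≠ j → Φ (u i) (u j) = 0)
    (d : Fin m → E) (hd : ∀ j, d j = Φ (u j) (u j)) :
    (∀ j, ι (d j) = d j) ∧
    ∃ d₀ : Fin m → E₀,
      (∀ j, algebraMap E₀ E (d₀ j) = d j ∧ d₀ j ≠ 0) ∧
      ∃ g : V ≃ₗ[ℚ] (Fin m → E₀ × E₀), ∀ x : V,
        Algebra.trace ℚ E (Φ x x) =
          ∑ j, (2 * Algebra.trace ℚ E₀ (d₀ j * ((g x j).1) ^ 2) +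
                2 * Algebra.trace ℚ E₀ (-θ0 * d₀ j * ((g x j).2) ^ 2)) := by
  classical
  have halg : Function.Injective (algebraMap E₀ E) := (algebraMap E₀ E).injective
  have hθne : θ ≠ 0 := by
    intro h
    exact hθ ⟨0, by simp [h]⟩
  have huniq : ∀ a b : E₀, algebraMap E₀ E a + algebraMap E₀ E b * θ = 0 → a = 0 ∧ b = 0 := by
    intro a b hab
    by_cases hb : b = 0
    · subst hb
      simp only [map_zero, zero_mul, add_zero] at hab
      exact ⟨halg (by simpa using hab), rfl⟩
    · exfalso
      apply hθ
      refine ⟨-a / b, ?_⟩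
      have hbE : algebraMap E₀ E b ≠ 0 := fun h => hb (halg (by simpa using h))
      rw [map_div₀, map_neg]
      field_simp
      linear_combination -hab
  -- part 1
  have hfix : ∀ j, ι (d j) = d j := by
    intro j
    rw [hd j]
    exact (hΦherm _ _).symm
  refine ⟨hfix, ?_⟩
  -- sum lemmas
  have sumΦ1 : ∀ (f : Fin m → V) (y : V), Φ (∑ i, f i) y = ∑ i, Φ (f i) y := by
    intro f y
    exact map_sum (AddMonoidHom.mk' (fun z => Φ z y) (fun p q => hΦadd1 p q y)) f Finset.univ
  have sumΦ2 : ∀ (y : V) (f : Fin m → V), Φ y (∑ i, f i) = ∑ i, Φ y (f i) := by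
    intro y f
    exact map_sum (AddMonoidHom.mk' (Φ y) (hΦadd2 y)) f Finset.univ
  -- d j ≠ 0
  have hdne : ∀ j, d j ≠ 0 := by
    intro j hj
    have hj' : Φ (u j) (u j) = 0 := by rw [← hd j]; exact hj
    have huj : u j = 0 := by
      apply hΦnondeg
      intro y
      have hy : y = ∑ i, u.repr y i • u i := (u.sum_repr y).symm
      rw [hy, sumΦ2]
      refine Finset.sum_eq_zero fun i _ => ?_
      rw [hΦsmul2]
      rcases eq_or_ne i j with rfl | hij
      · rw [hj', mul_zero]
      · rw [horth j i (Ne.symm hij), mul_zero]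
    exact u.ne_zero j huj
  -- decompose d j
  choose a b hab using fun j => hgen (d j)
  have hb0 : ∀ j, b j = 0 := by
    intro j
    have h1 := hfix j
    rw [hab j] at h1
    rw [map_add, map_mul, hιfix, hιfix, hιθ] at h1
    have h2 : (2 : E) * (algebraMap E₀ E (b j) * θ) = 0 := by linear_combination -h1
    have h3 : algebraMap E₀ E (b j) * θ = 0 := by
      have : (2 : E) ≠ 0 := two_ne_zero
      exact (mul_eq_zero.mp h2).resolve_left this
    rcases mul_eq_zero.mp h3 with h4 | h4
    · exact halg (by simpa using h4)
    · exact absurd h4 hθne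
  have hdeq : ∀ j, algebraMap E₀ E (a j) = d j := by
    intro j
    rw [hab j, hb0 j]
    simp
  have hane : ∀ j, a j ≠ 0 := by
    intro j ha
    apply hdne j
    rw [← hdeq j, ha, map_zero]
  refine ⟨a, fun j => ⟨hdeq j, hane j⟩, ?_⟩
  -- the linear equivalence E₀ × E₀ ≃ E
  let L : E₀ →ₗ[ℚ] E := (Algebra.linearMap E₀ E).restrictScalars ℚ
  let φ : E₀ × E₀ →ₗ[ℚ] E :=
    L.comp (LinearMap.fst ℚ E₀ E₀) +
      (LinearMap.mulRight ℚ θ).comp (L.comp (LinearMap.snd ℚ E₀ E₀))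
  have hφ : ∀ p : E₀ × E₀, φ p = algebraMap E₀ E p.1 + algebraMap E₀ E p.2 * θ :=
    fun p => rfl
  have hφbij : Function.Bijective φ := by
    constructor
    · intro p q hpq
      have h0 : φ (p - q) = 0 := by rw [map_sub, hpq, sub_self]
      rw [hφ] at h0
      have := huniq _ _ h0
      have h1 : p.1 = q.1 := by have := this.1; simpa [sub_eq_zero] using this
      have h2 : p.2 = q.2 := by have := this.2; simpa [sub_eq_zero] using this
      exact Prod.ext h1 h2
    · intro x
      obtain ⟨p, q, hpq⟩ := hgen x
      exact ⟨(p, q), by rw [hφ]; exact hpq.symm⟩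
  let e0 : (E₀ × E₀) ≃ₗ[ℚ] E := LinearEquiv.ofBijective φ hφbij
  have he0 : ∀ p : E₀ × E₀, e0 p = algebraMap E₀ E p.1 + algebraMap E₀ E p.2 * θ := hφ
  let g : V ≃ₗ[ℚ] (Fin m → E₀ × E₀) :=
    (u.equivFun.restrictScalars ℚ).trans (LinearEquiv.piCongrRight fun _ => e0.symm)
  have hgx : ∀ (x : V) (j : Fin m),
      algebraMap E₀ E (g x j).1 + algebraMap E₀ E (g x j).2 * θ = u.repr x j := by
    intro x j
    have h1 : g x j = e0.symm (u.repr x j) := by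
      simp [g, LinearEquiv.piCongrRight, Module.Basis.equivFun_apply]
      rfl
    rw [← he0, h1, e0.apply_symm_apply]
  -- finrank E₀ E = 2
  haveI : FiniteDimensional E₀ E := FiniteDimensional.right ℚ E₀ E
  have hrank : Module.finrank E₀ E = 2 := by
    have h1 : Module.finrank ℚ E = Module.finrank ℚ (E₀ × E₀) :=
      (LinearEquiv.finrank_eq e0).symm
    rw [Module.finrank_prod] at h1
    have h2 : Module.finrank ℚ E₀ * Module.finrank E₀ E = Module.finrank ℚ E :=
      Module.finrank_mul_finrank ℚ E₀ E
    have h3 : 0 < Module.finrank ℚ E₀ := Module.finrank_pos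
    refine Nat.eq_of_mul_eq_mul_left h3 ?_
    rw [h2, h1]; ring
  have htr : ∀ w : E₀, Algebra.trace ℚ E (algebraMap E₀ E w) = 2 * Algebra.trace ℚ E₀ w := by
    intro w
    rw [← Algebra.trace_trace (S := E₀), Algebra.trace_algebraMap, hrank,
      map_nsmul, nsmul_eq_mul]
    norm_num
  -- key diagonalization
  have key : ∀ x : V, Φ x x = ∑ j, u.repr x j * ι (u.repr x j) * d j := by
    intro x
    conv_lhs => rw [← u.sum_repr x]
    rw [sumΦ1]
    simp only [hΦsmul1]
    refine Finset.sum_congr rfl fun i _ => ?_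
    rw [sumΦ2]
    simp only [hΦsmul2]
    rw [Finset.mul_sum, Finset.sum_eq_single i]
    · rw [← hd i]; ring
    · intro j _ hji
      rw [horth i j (Ne.symm hji), mul_zero, mul_zero]
    · intro h; exact absurd (Finset.mem_univ i) h
  have hιc : ∀ (p q : E₀), ι (algebraMap E₀ E p + algebraMap E₀ E q * θ) =
      algebraMap E₀ E p - algebraMap E₀ E q * θ := by
    intro p q
    rw [map_add, map_mul, hιfix, hιfix, hιθ]
    ring
  have hprod : ∀ (p q e : E₀),
      (algebraMap E₀ E p + algebraMap E₀ E q * θ) *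
        (algebraMap E₀ E p - algebraMap E₀ E q * θ) * algebraMap E₀ E e =
      algebraMap E₀ E (e * p ^ 2 + -θ0 * e * q ^ 2) := by
    intro p q e
    simp only [map_add, map_mul, map_neg, map_pow]
    linear_combination (algebraMap E₀ E q ^ 2 * algebraMap E₀ E e) * hθ0
  refine ⟨g, fun x => ?_⟩
  rw [key x, map_sum]
  refine Finset.sum_congr rfl fun j _ => ?_
  rw [← hgx x j, hιc, ← hdeq j, hprod, htr, map_add]
  ring
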